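/- arXiv:0906.4255 — 2 statements merged into one kernel-verified Lean document; each statement's English description precedes it below -/
import Mathlib

section
/- Let (E_t, β_{s,t}) be a subproduct system of two-dimensional Hilbert spaces with a basis (x_t,y_t)_t of type E_3(λ), λ ∈ ℂ∖{0}, and let m ∈ {1,2,...}. Then the family (x_{mt}, y_{mt}/‖y_m‖)_{t∈{1,2,...}} is a basis of type E_3(λ^m) of the restricted subproduct system (E_{mt}, β_{ms,mt})_{s,t}. -/
noncomputable section

open scoped TensorProduct ComplexConjugate

namespace SubprodHilbert

section TensorConstruction


variable {E F : Type*} [NormedAddCommGroup E] [InnerProductSpace ℂ E]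
  [NormedAddCommGroup F] [InnerProductSpace ℂ F]

local notation "⟪" x ", " y "⟫" => @inner ℂ _ _ x y

/-- For fixed `u, v`, the ℂ-bilinear functional `(u', v') ↦ ⟪u,u'⟫ ⟪v,v'⟫`. -/
def innerAux (u : E) (v : F) : E →ₗ[ℂ] F →ₗ[ℂ] ℂ :=
  LinearMap.mk₂ ℂ (fun u' v' => ⟪u, u'⟫ * ⟪v, v'⟫)
    (fun m₁ m₂ n => by simp [inner_add_right]; ring)
    (fun c m n => by simp [inner_smul_right]; ring)
    (fun m n₁ n₂ => by simp [inner_add_right]; ring)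
    (fun c m n => by simp [inner_smul_right]; ring)

@[simp] lemma innerAux_apply (u u' : E) (v v' : F) :
    innerAux u v u' v' = ⟪u, u'⟫ * ⟪v, v'⟫ := rfl

/-- The (conjugate-linear-in-the-first-variable) map sending `z : E ⊗ F` to the linear
functional `w ↦ ⟪z, w⟫`. -/
def innerFunc : E ⊗[ℂ] F →+ (E ⊗[ℂ] F →ₗ[ℂ] ℂ) :=
  TensorProduct.liftAddHom
    (AddMonoidHom.mk'
      (fun u => AddMonoidHom.mk' (fun v => TensorProduct.lift (innerAux u v))
        (fun v₁ v₂ => by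
          apply TensorProduct.ext'
          intro u' v'
          simp [inner_add_left]
          ring))
      (fun u₁ u₂ => by
        ext v : 1
        apply TensorProduct.ext'
        intro u' v'
        simp [inner_add_left]
        ring))
    (fun c u v => by
      apply TensorProduct.ext'
      intro u' v'
      simp [inner_smul_left]
      ring)

@[simp] lemma innerFunc_tmul (u u' : E) (v v' : F) :
    innerFunc (u ⊗ₜ[ℂ] v) (u' ⊗ₜ[ℂ] v') = ⟪u, u'⟫ * ⟪v, v'⟫ := rfl

lemma innerFunc_smul (c : ℂ) (z : E ⊗[ℂ] F) :
    innerFunc (c • z) = conj c • innerFunc z := by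
  induction z using TensorProduct.induction_on with
  | zero => simp
  | tmul u v =>
      rw [TensorProduct.smul_tmul']
      apply TensorProduct.ext'
      intro u' v'
      simp [inner_smul_left]
      ring
  | add z₁ z₂ h₁ h₂ => rw [smul_add, map_add, map_add, h₁, h₂, smul_add]

lemma innerFunc_conj_symm (z w : E ⊗[ℂ] F) :
    conj (innerFunc w z) = innerFunc z w := by
  induction z using TensorProduct.induction_on with
  | zero => simp
  | tmul u v =>
      induction w using TensorProduct.induction_on with
      | zero => simp
      | tmul u' v' =>
          simp only [innerFunc_tmul, map_mul, inner_conj_symm]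
      | add w₁ w₂ h₁ h₂ => simp [map_add, h₁, h₂]
  | add z₁ z₂ h₁ h₂ => simp [map_add, h₁, h₂]

lemma exists_orthonormal_rep (z : E ⊗[ℂ] F) :
    ∃ (n : ℕ) (e : Fin n → E) (w : Fin n → F),
      Orthonormal ℂ e ∧ z = ∑ i, e i ⊗ₜ[ℂ] w i := by
  obtain ⟨S, rfl⟩ := TensorProduct.exists_finset z
  set U : Submodule ℂ E := Submodule.span ℂ (Prod.fst '' (S : Set (E × F))) with hU
  haveI : FiniteDimensional ℂ U :=
    FiniteDimensional.span_of_finite ℂ (S.finite_toSet.image _)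
  let b : OrthonormalBasis (Fin (Module.finrank ℂ U)) ℂ U := stdOrthonormalBasis ℂ U
  have hone : Orthonormal ℂ (fun i => (b i : E)) := by
    have hb := b.orthonormal
    constructor
    · intro i; simpa [norm] using hb.1 i
    · intro i j hij; simpa [Submodule.coe_inner] using hb.2 hij
  refine ⟨_, fun i => (b i : E), fun i => ∑ p ∈ S, ⟪(b i : E), p.1⟫ • p.2, hone, ?_⟩
  have key : ∀ p ∈ S, p.1 ⊗ₜ[ℂ] p.2 = ∑ i, ⟪(b i : E), p.1⟫ • ((b i : E) ⊗ₜ[ℂ] p.2) := by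
    intro p hp
    have hmem : p.1 ∈ U := Submodule.subset_span ⟨p, hp, rfl⟩
    have hrep : ((∑ i, (⟪b i, (⟨p.1, hmem⟩ : U)⟫ : ℂ) • b i : U) : E) = p.1 := by
      rw [b.sum_repr' ⟨p.1, hmem⟩]
    have h2 : ∀ i, (⟪b i, (⟨p.1, hmem⟩ : U)⟫ : ℂ) = ⟪(b i : E), p.1⟫ := fun i =>
      Submodule.coe_inner U (b i) ⟨p.1, hmem⟩
    have hrep' : p.1 = ∑ i, ⟪(b i : E), p.1⟫ • (b i : E) := by
      calc p.1 = ((∑ i, (⟪b i, (⟨p.1, hmem⟩ : U)⟫ : ℂ) • b i : U) : E) := hrep.symm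
        _ = ∑ i, (⟪b i, (⟨p.1, hmem⟩ : U)⟫ : ℂ) • (b i : E) := by push_cast; rfl
        _ = ∑ i, ⟪(b i : E), p.1⟫ • (b i : E) := Finset.sum_congr rfl fun i _ => by rw [h2]
    calc p.1 ⊗ₜ[ℂ] p.2 = (∑ i, ⟪(b i : E), p.1⟫ • (b i : E)) ⊗ₜ[ℂ] p.2 := by rw [← hrep']
      _ = ∑ i, ⟪(b i : E), p.1⟫ • ((b i : E) ⊗ₜ[ℂ] p.2) := by
          rw [TensorProduct.sum_tmul]
          refine Finset.sum_congr rfl fun i _ => ?_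
          rw [TensorProduct.smul_tmul']
  calc ∑ p ∈ S, p.1 ⊗ₜ[ℂ] p.2
      = ∑ p ∈ S, ∑ i, ⟪(b i : E), p.1⟫ • ((b i : E) ⊗ₜ[ℂ] p.2) :=
        Finset.sum_congr rfl key
    _ = ∑ i, ∑ p ∈ S, ⟪(b i : E), p.1⟫ • ((b i : E) ⊗ₜ[ℂ] p.2) := Finset.sum_comm
    _ = ∑ i, (b i : E) ⊗ₜ[ℂ] (∑ p ∈ S, ⟪(b i : E), p.1⟫ • p.2) := by
        refine Finset.sum_congr rfl fun i _ => ?_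
        rw [TensorProduct.tmul_sum]
        refine Finset.sum_congr rfl fun p _ => ?_
        rw [TensorProduct.tmul_smul]

lemma innerFunc_self (n : ℕ) (e : Fin n → E) (w : Fin n → F) (he : Orthonormal ℂ e) :
    innerFunc (∑ i, e i ⊗ₜ[ℂ] w i) (∑ i, e i ⊗ₜ[ℂ] w i) = ∑ i, ⟪w i, w i⟫ := by
  have hee : ∀ i j, (⟪e i, e j⟫ : ℂ) = if i = j then 1 else 0 := orthonormal_iff_ite.mp he
  simp only [map_sum, LinearMap.coe_sum, Finset.sum_apply, innerFunc_tmul, hee, ite_mul,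
    one_mul, zero_mul]
  rw [Finset.sum_comm]
  simp

/-- The inner-product-space core on the algebraic tensor product of two complex
inner product spaces, determined by `⟪u ⊗ v, u' ⊗ v'⟫ = ⟪u,u'⟫ ⟪v,v'⟫`. -/
def tensorCore : InnerProductSpace.Core ℂ (E ⊗[ℂ] F) where
  inner z w := innerFunc z w
  conj_inner_symm := innerFunc_conj_symm
  re_inner_nonneg z := by
    show 0 ≤ RCLike.re (innerFunc z z)
    obtain ⟨n, e, w, he, rfl⟩ := exists_orthonormal_rep z
    rw [innerFunc_self n e w he]
    rw [map_sum]
    exact Finset.sum_nonneg fun i _ => inner_self_nonneg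
  add_left z₁ z₂ w := by
    show innerFunc (z₁ + z₂) w = innerFunc z₁ w + innerFunc z₂ w
    rw [map_add]; rfl
  smul_left z w c := by
    show innerFunc (c • z) w = conj c * innerFunc z w
    rw [innerFunc_smul]; rfl
  definite z hz := by
    replace hz : innerFunc z z = 0 := hz
    obtain ⟨n, e, w, he, rfl⟩ := exists_orthonormal_rep z
    rw [innerFunc_self n e w he] at hz
    have hz' : ∑ i, (‖w i‖ ^ 2 : ℝ) = 0 := by
      have := congrArg Complex.re hz
      simpa [← @inner_self_eq_norm_sq ℂ] using this
    have hw : ∀ i ∈ Finset.univ, w i = 0 := by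
      intro i hi
      have h0 : (‖w i‖ ^ 2 : ℝ) = 0 :=
        (Finset.sum_eq_zero_iff_of_nonneg fun j _ => sq_nonneg _).mp hz' i hi
      simpa using h0
    calc ∑ i, e i ⊗ₜ[ℂ] w i = ∑ i : Fin n, (0 : E ⊗[ℂ] F) :=
          Finset.sum_congr rfl fun i hi => by rw [hw i hi, TensorProduct.tmul_zero]
      _ = 0 := Finset.sum_const_zero

instance tensorNormedAddCommGroup : NormedAddCommGroup (E ⊗[ℂ] F) :=
  @InnerProductSpace.Core.toNormedAddCommGroup ℂ _ _ _ _ tensorCore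

instance tensorInnerProductSpace : InnerProductSpace ℂ (E ⊗[ℂ] F) :=
  InnerProductSpace.ofCore tensorCore.toCore

@[simp] lemma inner_tmul (u u' : E) (v v' : F) :
    (inner ℂ (u ⊗ₜ[ℂ] v) (u' ⊗ₜ[ℂ] v') : ℂ) = ⟪u, u'⟫ * ⟪v, v'⟫ := rfl
end TensorConstruction


/-- Cast between the fibers of a family of inner product spaces along an equality of
indices, as a linear isometric isomorphism. -/
def castE {ι : Type*} (E : ι → Type*) [∀ t, NormedAddCommGroup (E t)]
    [∀ t, InnerProductSpace ℂ (E t)] {a b : ι} (h : a = b) : E a ≃ₗᵢ[ℂ] E b := by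
  subst h; exact LinearIsometryEquiv.refl ℂ (E a)


section Discrete

variable (E F : ℕ+ → Type*)
  [∀ t, NormedAddCommGroup (E t)] [∀ t, InnerProductSpace ℂ (E t)]
  [∀ t, NormedAddCommGroup (F t)] [∀ t, InnerProductSpace ℂ (F t)]
variable (β : ∀ s t : ℕ+, E (s + t) →ₗᵢ[ℂ] (E s ⊗[ℂ] E t))
variable (γ : ∀ s t : ℕ+, F (s + t) →ₗᵢ[ℂ] (F s ⊗[ℂ] F t))

/-- The associativity condition in the definition of a subproduct system. -/
def SubprodAssoc : Prop :=
  ∀ r s t : ℕ+, ∀ u : E (r + s + t),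
    (TensorProduct.assoc ℂ (E r) (E s) (E t))
      (TensorProduct.map (β r s).toLinearMap LinearMap.id (β (r + s) t u))
    = TensorProduct.map LinearMap.id (β s t).toLinearMap
        (β r (s + t) (castE E (add_assoc r s t) u))

/-- `(x, y)` is a basis of type `𝓔₁(a)` of the subproduct system `(E, β)`. -/
def IsBasisE1 (a : ℝ) (x y : ∀ t : ℕ+, E t) : Prop :=
  (∀ t, ‖x t‖ = 1) ∧ (∀ t, ‖y t‖ = 1) ∧
  (∀ t : ℕ+, (inner ℂ (x t) (y t) : ℂ) = (a : ℂ) ^ (t : ℕ)) ∧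
  (∀ s t : ℕ+, β s t (x (s + t)) = x s ⊗ₜ[ℂ] x t) ∧
  (∀ s t : ℕ+, β s t (y (s + t)) = y s ⊗ₜ[ℂ] y t)

/-- `(x, y)` is a basis of type `𝓔₂(a)` of the subproduct system `(E, β)`. -/
def IsBasisE2 (a : ℝ) (x y : ∀ t : ℕ+, E t) : Prop :=
  (∀ t, ‖x t‖ = 1) ∧ (∀ t, ‖y t‖ = 1) ∧
  (∀ t : ℕ+, (inner ℂ (x t) (y t) : ℂ) = (a : ℂ) ^ (t : ℕ)) ∧
  (∀ s t : ℕ+, Even (s : ℕ) → β s t (x (s + t)) = x s ⊗ₜ[ℂ] x t) ∧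
  (∀ s t : ℕ+, ¬ Even (s : ℕ) → β s t (x (s + t)) = x s ⊗ₜ[ℂ] y t) ∧
  (∀ s t : ℕ+, Even (s : ℕ) → β s t (y (s + t)) = y s ⊗ₜ[ℂ] y t) ∧
  (∀ s t : ℕ+, ¬ Even (s : ℕ) → β s t (y (s + t)) = y s ⊗ₜ[ℂ] x t)

/-- `(x, y)` is a basis of type `𝓔₃(λ)` of the subproduct system `(E, β)`. -/
def IsBasisE3 (l : ℂ) (x y : ∀ t : ℕ+, E t) : Prop :=
  (∀ t, ‖x t‖ = 1) ∧
  (∀ t : ℕ+, ‖y t‖ ^ 2 = ∑ k ∈ Finset.range (t : ℕ), ‖l‖ ^ (2 * k)) ∧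
  (∀ t : ℕ+, (inner ℂ (x t) (y t) : ℂ) = 0) ∧
  (∀ s t : ℕ+, β s t (x (s + t)) = x s ⊗ₜ[ℂ] x t) ∧
  (∀ s t : ℕ+, β s t (y (s + t)) = y s ⊗ₜ[ℂ] x t + l ^ (s : ℕ) • (x s ⊗ₜ[ℂ] y t))

/-- `(x, y)` is a basis of type `𝓔₄` of the subproduct system `(E, β)`. -/
def IsBasisE4 (x y : ∀ t : ℕ+, E t) : Prop :=
  (∀ t, ‖x t‖ = 1) ∧ (∀ t, ‖y t‖ = 1) ∧
  (∀ t : ℕ+, (inner ℂ (x t) (y t) : ℂ) = 0) ∧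
  (∀ s t : ℕ+, β s t (x (s + t)) = x s ⊗ₜ[ℂ] x t) ∧
  (∀ s t : ℕ+, β s t (y (s + t)) = y s ⊗ₜ[ℂ] x t)

/-- `(x, y)` is a basis of type `𝓔₅` of the subproduct system `(E, β)`. -/
def IsBasisE5 (x y : ∀ t : ℕ+, E t) : Prop :=
  (∀ t, ‖x t‖ = 1) ∧ (∀ t, ‖y t‖ = 1) ∧
  (∀ t : ℕ+, (inner ℂ (x t) (y t) : ℂ) = 0) ∧
  (∀ s t : ℕ+, β s t (x (s + t)) = x s ⊗ₜ[ℂ] x t) ∧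
  (∀ s t : ℕ+, β s t (y (s + t)) = x s ⊗ₜ[ℂ] y t)

/-- The five types of bases, together with their parameters. -/
inductive BType : Type
  | e1 (a : ℝ) | e2 (a : ℝ) | e3 (l : ℂ) | e4 | e5

/-- `(x, y)` is a basis of the subproduct system `(E, β)` of the given type (this includes
the admissibility constraints `a ∈ [0,1)`, resp. `λ ≠ 0`, on the parameter). -/
def IsBasisOfType : BType → (∀ t : ℕ+, E t) → (∀ t : ℕ+, E t) → Prop
  | .e1 a => fun x y => 0 ≤ a ∧ a < 1 ∧ IsBasisE1 E β a x y
  | .e2 a => fun x y => 0 ≤ a ∧ a < 1 ∧ IsBasisE2 E β a x y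
  | .e3 l => fun x y => l ≠ 0 ∧ IsBasisE3 E β l x y
  | .e4 => fun x y => IsBasisE4 E β x y
  | .e5 => fun x y => IsBasisE5 E β x y

/-- The family `θ` of unitaries intertwines the subproduct systems `(E, β)` and `(F, γ)`,
i.e. it is an isomorphism of subproduct systems. -/
def Intertwines (θ : ∀ t : ℕ+, E t ≃ₗᵢ[ℂ] F t) : Prop :=
  ∀ s t : ℕ+, ∀ w : E (s + t),
    γ s t (θ (s + t) w) =
      TensorProduct.map (θ s).toLinearEquiv.toLinearMap (θ t).toLinearEquiv.toLinearMap
        (β s t w)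

/-- The structure maps of the subproduct system `(E_{mt})_t` obtained by restricting
`(E, β)` to the multiples of `m`. -/
def restrictβ (m : ℕ+) :
    ∀ s t : ℕ+, E (m * (s + t)) →ₗᵢ[ℂ] (E (m * s) ⊗[ℂ] E (m * t)) := fun s t =>
  (β (m * s) (m * t)).comp (castE E (by rw [mul_add])).toLinearIsometry

end Discrete


lemma castE_apply_fam {ι : Type*} (E : ι → Type*) [∀ t, NormedAddCommGroup (E t)]
    [∀ t, InnerProductSpace ℂ (E t)] (x : ∀ t, E t) {a b : ι} (h : a = b) :
    castE E h (x a) = x b := by subst h; rfl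

lemma geom_aux (a : ℝ) (m t : ℕ) :
    ∑ k ∈ Finset.range (m * t), a ^ k
      = (∑ k ∈ Finset.range m, a ^ k) * ∑ j ∈ Finset.range t, (a ^ m) ^ j := by
  induction t with
  | zero => simp
  | succ t ih =>
    rw [Nat.mul_succ, Finset.sum_range_add, ih, Finset.sum_range_succ, mul_add]
    congr 1
    rw [Finset.sum_mul]
    refine Finset.sum_congr rfl fun i _ => ?_
    rw [pow_add, pow_mul, mul_comm]

/-- **(2.1), case `𝓔₃(λ)`.** Restricting a basis of type `𝓔₃(λ)` to the multiples of `m`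
(and renormalizing `y`) yields a basis of type `𝓔₃(λᵐ)` of the restricted subproduct
system. -/
theorem statement10
    (E : ℕ+ → Type*) [∀ t, NormedAddCommGroup (E t)] [∀ t, InnerProductSpace ℂ (E t)]
    (hdim : ∀ t, Module.finrank ℂ (E t) = 2)
    (β : ∀ s t : ℕ+, E (s + t) →ₗᵢ[ℂ] (E s ⊗[ℂ] E t))
    (hassoc : SubprodAssoc E β)
    (l : ℂ) (hl : l ≠ 0)
    (x y : ∀ t : ℕ+, E t) (hxy : IsBasisE3 E β l x y) (m : ℕ+) :
    IsBasisE3 (fun t => E (m * t)) (restrictβ E β m) (l ^ (m : ℕ))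
      (fun t => x (m * t)) (fun t => (‖y m‖ : ℂ)⁻¹ • y (m * t)) := by
  obtain ⟨hx, hy, hxyorth, hβx, hβy⟩ := hxy
  have ha : (0 : ℝ) < ‖l‖ := by
    exact norm_pos_iff.mpr hl
  have hym2 : ‖y m‖ ^ 2 = ∑ k ∈ Finset.range (m : ℕ), ‖l‖ ^ (2 * k) := hy m
  have hympos : (0 : ℝ) < ‖y m‖ ^ 2 := by
    rw [hym2]
    refine Finset.sum_pos (fun k _ => pow_pos ha _) ?_
    simpa using Finset.nonempty_range_iff.mpr (Nat.pos_iff.mp m.pos).symm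
  have hym0 : ‖y m‖ ≠ 0 := by
    intro h; rw [h] at hympos; simpa using hympos
  refine ⟨fun t => hx _, ?_, ?_, ?_, ?_⟩
  · -- norm of renormalized y
    intro t
    have hnorm : ‖(‖y m‖ : ℂ)⁻¹ • y (m * t)‖ = ‖y m‖⁻¹ * ‖y (m * t)‖ := by
      rw [norm_smul]
      simp
    rw [hnorm, mul_pow, hy (m * t)]
    have key : ∑ k ∈ Finset.range ((m * t : ℕ+) : ℕ), ‖l‖ ^ (2 * k)
        = (‖y m‖ ^ 2) * ∑ k ∈ Finset.range (t : ℕ), ‖l ^ (m : ℕ)‖ ^ (2 * k) := by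
      rw [hym2]
      have := geom_aux (‖l‖ ^ 2) (m : ℕ) (t : ℕ)
      rw [PNat.mul_coe]
      calc ∑ k ∈ Finset.range ((m : ℕ) * (t : ℕ)), ‖l‖ ^ (2 * k)
          = ∑ k ∈ Finset.range ((m : ℕ) * (t : ℕ)), (‖l‖ ^ 2) ^ k := by
            refine Finset.sum_congr rfl fun k _ => ?_; rw [← pow_mul]
        _ = (∑ k ∈ Finset.range (m : ℕ), (‖l‖ ^ 2) ^ k)
              * ∑ j ∈ Finset.range (t : ℕ), ((‖l‖ ^ 2) ^ (m : ℕ)) ^ j := this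
        _ = _ := by
            congr 1
            · refine Finset.sum_congr rfl fun k _ => ?_; rw [← pow_mul]
            · refine Finset.sum_congr rfl fun k _ => ?_
              rw [norm_pow, ← pow_mul, ← pow_mul, ← pow_mul]
              ring_nf
    rw [key, ← mul_assoc, inv_pow, inv_mul_cancel₀ (by positivity), one_mul]
  · -- orthogonality
    intro t
    show (inner ℂ (x (m * t)) ((‖y m‖ : ℂ)⁻¹ • y (m * t)) : ℂ) = 0
    rw [inner_smul_right, hxyorth (m * t), mul_zero]
  · -- β on x
    intro s t
    show restrictβ E β m s t (x (m * (s + t))) = _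
    rw [restrictβ]
    simp only [LinearIsometry.coe_comp, Function.comp_apply,
      LinearIsometryEquiv.coe_toLinearIsometry]
    rw [castE_apply_fam E x, hβx (m * s) (m * t)]
  · -- β on y
    intro s t
    show restrictβ E β m s t ((‖y m‖ : ℂ)⁻¹ • y (m * (s + t))) = _
    rw [map_smul, restrictβ]
    simp only [LinearIsometry.coe_comp, Function.comp_apply,
      LinearIsometryEquiv.coe_toLinearIsometry]
    rw [castE_apply_fam E y, hβy (m * s) (m * t)]
    rw [smul_add, TensorProduct.smul_tmul', ← pow_mul, ← PNat.mul_coe]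
    rw [smul_comm ((‖y m‖ : ℂ)⁻¹) (l ^ ((m * s : ℕ+) : ℕ)), TensorProduct.tmul_smul]


end SubprodHilbert
end
end

section
/- Let (E_t, β_{s,t}) be a subproduct system of two-dimensional Hilbert spaces. Then the restricted subproduct system (E_{2t}, β_{2s,2t})_{s,t∈{1,2,...}} admits no basis of type E_2(a) for any a ∈ [0,1). -/
noncomputable section

open scoped TensorProduct ComplexConjugate

namespace SubprodHilbert

section TensorConstruction


variable {E F : Type*} [NormedAddCommGroup E] [InnerProductSpace ℂ E]
  [NormedAddCommGroup F] [InnerProductSpace ℂ F]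

local notation "⟪" x ", " y "⟫" => @inner ℂ _ _ x y

end TensorConstruction


section AuxForStatement13


lemma fin2cases (P : Fin 2 → Prop) (h0 : P 0) (h1 : P 1) : ∀ k, P k := by
  intro k
  fin_cases k
  · exact h0
  · exact h1

lemma vec_dep {u v : Fin 2 → ℂ} (h : u 0 * v 1 - u 1 * v 0 = 0) (hu : ∃ j, u j ≠ 0) :
    ∃ d : ℂ, ∀ k, v k = d * u k := by
  by_cases h0 : u 0 = 0
  · have h1 : u 1 ≠ 0 := by
      obtain ⟨j, hj⟩ := hu
      refine fin2cases (fun j => u j ≠ 0 → u 1 ≠ 0) (fun hj => absurd h0 hj) (fun hj => hj) j hj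
    refine ⟨v 1 / u 1, fin2cases _ ?_ ?_⟩
    · have hv0 : u 1 * v 0 = 0 := by rw [h0] at h; linear_combination -h
      have hv : v 0 = 0 := by
        rcases mul_eq_zero.mp hv0 with h' | h'
        · exact absurd h' h1
        · exact h'
      rw [hv, h0]; ring
    · field_simp
  · refine ⟨v 0 / u 0, fin2cases _ ?_ ?_⟩
    · field_simp
    · field_simp
      linear_combination h



/-- rank-one extraction for a nonzero 2×2 "matrix" with zero determinant -/
lemma rank_one {A : Fin 2 → Fin 2 → ℂ} (hdet : A 0 0 * A 1 1 - A 0 1 * A 1 0 = 0)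
    (hA : ∃ j k, A j k ≠ 0) :
    ∃ p q : Fin 2 → ℂ, (∃ j, p j ≠ 0) ∧ (∃ k, q k ≠ 0) ∧ ∀ j k, A j k = p j * q k := by
  by_cases h0 : ∃ k, A 0 k ≠ 0
  · -- rows: A 1 = d • A 0 by vec_dep on the transpose-ish: cross (A 0) (A 1) as vectors?
    -- rows of A as vectors: u := A 0, v := A 1, cross u v = A00*A11 - A01*A10? cross is
    -- u 0 * v 1 - u 1 * v 0 = A 0 0 * A 1 1 - A 0 1 * A 1 0 ✓
    obtain ⟨d, hd⟩ := vec_dep (u := A 0) (v := A 1) hdet h0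
    refine ⟨![1, d], A 0, ⟨0, by norm_num⟩, h0, fin2cases _ ?_ ?_⟩
    · intro k; simp
    · intro k; rw [hd k]; simp
  · push_neg at h0
    have h1 : ∃ k, A 1 k ≠ 0 := by
      obtain ⟨j, k, hjk⟩ := hA
      refine ⟨k, ?_⟩
      have := fin2cases (fun j => A j k ≠ 0 → A 1 k ≠ 0) (fun h => absurd (h0 k) h) (fun h => h) j
      exact this hjk
    refine ⟨![0, 1], A 1, ⟨1, by norm_num⟩, h1, fin2cases _ ?_ ?_⟩
    · intro k; rw [h0 k]; simp
    · intro k; simp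



lemma det_zero {A B : Fin 2 → Fin 2 → ℂ}
    (hind : ∀ α β : ℂ, (∀ j k, α * A j k + β * B j k = 0) → α = 0 ∧ β = 0)
    (h : ∀ i l, ∃ α β : ℂ, ∀ j k, A i j * B k l = α * A j k + β * B j k) :
    A 0 0 * A 1 1 - A 0 1 * A 1 0 = 0 := by
  by_contra hdet
  -- rows of A are independent
  have rowind : ∀ a b : ℂ, (∀ j, a * A 0 j + b * A 1 j = 0) → a = 0 ∧ b = 0 := by
    intro a b hab
    constructor
    · have ha : a * (A 0 0 * A 1 1 - A 0 1 * A 1 0) = 0 := by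
        linear_combination (A 1 1) * hab 0 - (A 1 0) * hab 1
      rcases mul_eq_zero.mp ha with h' | h'
      · exact h'
      · exact absurd h' hdet
    · have hb : b * (A 0 0 * A 1 1 - A 0 1 * A 1 0) = 0 := by
        linear_combination (A 0 0) * hab 1 - (A 0 1) * hab 0
      rcases mul_eq_zero.mp hb with h' | h'
      · exact h'
      · exact absurd h' hdet
  -- B ≠ 0
  have hBne : ∃ k l, B k l ≠ 0 := by
    by_contra hB
    push_neg at hB
    have := (hind 0 1 (fun j k => by rw [hB j k]; ring)).2
    exact one_ne_zero this
  obtain ⟨k₀, l₀, hk₀⟩ := hBne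
  obtain ⟨α, β, hM0⟩ := h 0 l₀
  obtain ⟨α', β', hM1⟩ := h 1 l₀
  by_cases hΔ : α * β' - α' * β = 0
  · -- degenerate case
    have hrow : ∀ j, α' * A 0 j + (-α) * A 1 j = 0 := by
      intro j
      have key : (α' * A 0 j - α * A 1 j) * B k₀ l₀ = (α' * β - α * β') * B j k₀ := by
        linear_combination α' * hM0 j k₀ - α * hM1 j k₀
      have hz : α' * β - α * β' = 0 := by linear_combination -hΔ
      rw [hz, zero_mul] at key
      rcases mul_eq_zero.mp key with h' | h'
      · linear_combination h'
      · exact absurd h' hk₀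
    obtain ⟨hα', hα⟩ := rowind _ _ hrow
    have hα : α = 0 := by linear_combination -hα
    have hβ : β ≠ 0 := by
      intro hβ
      have : ∀ j, (1:ℂ) * A 0 j + 0 * A 1 j = 0 := by
        intro j
        have := hM0 j k₀
        rw [hα, hβ] at this
        simp at this
        rcases this with h' | h'
        · rw [h']; ring
        · exact absurd h' hk₀
      exact one_ne_zero (rowind 1 0 this).1
    have hβ' : β' ≠ 0 := by
      intro hβ'
      have : ∀ j, (0:ℂ) * A 0 j + 1 * A 1 j = 0 := by
        intro j
        have := hM1 j k₀
        rw [hα', hβ'] at this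
        simp at this
        rcases this with h' | h'
        · rw [h']; ring
        · exact absurd h' hk₀
      exact one_ne_zero (rowind 0 1 this).2
    have hrow2 : ∀ j, β' * A 0 j + (-β) * A 1 j = 0 := by
      intro j
      have key : (β' * A 0 j - β * A 1 j) * B k₀ l₀ = 0 := by
        rw [hα] at hM0; rw [hα'] at hM1
        linear_combination β' * hM0 j k₀ - β * hM1 j k₀
      rcases mul_eq_zero.mp key with h' | h'
      · linear_combination h'
      · exact absurd h' hk₀
    exact hβ' (rowind _ _ hrow2).1
  · -- Δ ≠ 0 : A is rank one, det A = 0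
    have key : ∀ j k, (α * β' - α' * β) * A j k = (β' * A 0 j - β * A 1 j) * B k l₀ := by
      intro j k
      linear_combination β * hM1 j k - β' * hM0 j k
    have hd2 : (α * β' - α' * β)^2 * (A 0 0 * A 1 1 - A 0 1 * A 1 0) = 0 := by
      calc (α * β' - α' * β)^2 * (A 0 0 * A 1 1 - A 0 1 * A 1 0)
          = ((α * β' - α' * β) * A 0 0) * ((α * β' - α' * β) * A 1 1)
            - ((α * β' - α' * β) * A 0 1) * ((α * β' - α' * β) * A 1 0) := by ring
        _ = ((β' * A 0 0 - β * A 1 0) * B 0 l₀) * ((β' * A 0 1 - β * A 1 1) * B 1 l₀)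
            - ((β' * A 0 0 - β * A 1 0) * B 1 l₀) * ((β' * A 0 1 - β * A 1 1) * B 0 l₀) := by
            rw [key 0 0, key 1 1, key 0 1, key 1 0]
        _ = 0 := by ring
    rcases mul_eq_zero.mp hd2 with h' | h'
    · exact hΔ (sq_eq_zero_iff.mp h')
    · exact absurd h' hdet



lemma scaled {c Z : ℂ} {u v : Fin 2 → ℂ} (hc : c ≠ 0) (h : ∀ j, c * v j = Z * u j) :
    ∃ d : ℂ, ∀ j, v j = d * u j := by
  refine ⟨Z / c, fun j => ?_⟩
  field_simp
  linear_combination h j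

lemma matrix_core {X Y : Fin 2 → Fin 2 → ℂ}
    (hindep : ∀ α β : ℂ, (∀ j k, α * X j k + β * Y j k = 0) → α = 0 ∧ β = 0)
    (hXY : ∀ i l, ∃ α β : ℂ, ∀ j k, X i j * Y k l = α * X j k + β * Y j k)
    (hYX : ∀ i l, ∃ α β : ℂ, ∀ j k, Y i j * X k l = α * X j k + β * Y j k) : False := by
  -- both X and Y are nonzero
  have hXne : ∃ j k, X j k ≠ 0 := by
    by_contra hX
    push_neg at hX
    exact one_ne_zero (hindep 1 0 (fun j k => by rw [hX j k]; ring)).1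
  have hYne : ∃ j k, Y j k ≠ 0 := by
    by_contra hY
    push_neg at hY
    exact one_ne_zero (hindep 0 1 (fun j k => by rw [hY j k]; ring)).2
  -- symmetric versions of hindep / hXY for applying det_zero to Y
  have hindep' : ∀ α β : ℂ, (∀ j k, α * Y j k + β * X j k = 0) → α = 0 ∧ β = 0 := by
    intro α β hab
    have := hindep β α (fun j k => by linear_combination hab j k)
    exact ⟨this.2, this.1⟩
  have hYX' : ∀ i l, ∃ α β : ℂ, ∀ j k, Y i j * X k l = α * Y j k + β * X j k := by
    intro i l
    obtain ⟨α, β, hh⟩ := hYX i l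
    exact ⟨β, α, fun j k => by linear_combination hh j k⟩
  have hdetX := det_zero hindep hXY
  have hdetY := det_zero hindep' hYX'
  obtain ⟨p, q, hp, hq, hXpq⟩ := rank_one hdetX hXne
  obtain ⟨s, t, hs, ht, hYst⟩ := rank_one hdetY hYne
  obtain ⟨i₀, hi₀⟩ := hp
  obtain ⟨j₀, hj₀⟩ := hq
  obtain ⟨i₁, hi₁⟩ := hs
  obtain ⟨l₁, hl₁⟩ := ht
  -- condition C1 : c • (q ⊗ s) ∈ span{X, Y}  with c = p i₀ * t l₁ ≠ 0
  obtain ⟨α₁, β₁, hC1⟩ := hXY i₀ l₁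
  have C1 : ∀ j k, (p i₀ * t l₁) * (q j * s k) = α₁ * (p j * q k) + β₁ * (s j * t k) := by
    intro j k
    have := hC1 j k
    rw [hXpq i₀ j, hYst k l₁, hXpq j k, hYst j k] at this
    linear_combination this
  obtain ⟨α₂, β₂, hC2⟩ := hYX i₁ j₀
  have C2 : ∀ j k, (s i₁ * q j₀) * (t j * p k) = α₂ * (p j * q k) + β₂ * (s j * t k) := by
    intro j k
    have := hC2 j k
    rw [hYst i₁ j, hXpq k j₀, hXpq j k, hYst j k] at this
    linear_combination this
  have hc : p i₀ * t l₁ ≠ 0 := mul_ne_zero hi₀ hl₁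
  have hc' : s i₁ * q j₀ ≠ 0 := mul_ne_zero hi₁ hj₀
  by_cases hps : p 0 * s 1 - p 1 * s 0 = 0
  · -- Case A : s is a multiple of p
    obtain ⟨d, hsd⟩ := vec_dep hps ⟨i₀, hi₀⟩
    have hd : d ≠ 0 := by
      intro h0
      exact hi₁ (by rw [hsd i₁, h0, zero_mul])
    have hq1 : ∀ j, (p i₀ * t l₁ * d * p i₀) * q j = (α₁ * q i₀ + β₁ * (d * t i₀)) * p j := by
      intro j
      have e := C1 j i₀
      rw [hsd i₀, hsd j] at e
      linear_combination e
    obtain ⟨f, hqp⟩ := scaled (mul_ne_zero (mul_ne_zero hc hd) hi₀) hq1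
    have hf : f ≠ 0 := by
      intro h0
      exact hj₀ (by rw [hqp j₀, h0, zero_mul])
    have ht1 : ∀ j, (s i₁ * q j₀ * p i₀) * t j = (α₂ * q i₀ + β₂ * (d * t i₀)) * p j := by
      intro j
      have e := C2 j i₀
      rw [hsd j] at e
      linear_combination e
    obtain ⟨g, htp⟩ := scaled (mul_ne_zero hc' hi₀) ht1
    have hfin := hindep (d * g) (-f)
      (fun j k => by rw [hXpq j k, hYst j k, hqp k, hsd j, htp k]; ring)
    exact hf (by linear_combination -hfin.2)
  · by_cases hqt : q 0 * t 1 - q 1 * t 0 = 0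
    · -- Case B : t is a multiple of q
      obtain ⟨e, hte⟩ := vec_dep hqt ⟨j₀, hj₀⟩
      have he : e ≠ 0 := by
        intro h0
        exact hl₁ (by rw [hte l₁, h0, zero_mul])
      have hs1 : ∀ k, (p i₀ * t l₁ * q j₀) * s k = (α₁ * p j₀ + β₁ * (s j₀ * e)) * q k := by
        intro k
        have e1 := C1 j₀ k
        rw [hte k] at e1
        linear_combination e1
      obtain ⟨m, hsq⟩ := scaled (mul_ne_zero hc hj₀) hs1
      have hp1 : ∀ k, (s i₁ * q j₀ * (e * q j₀)) * p k
          = (α₂ * p j₀ + β₂ * (m * q j₀ * e)) * q k := by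
        intro k
        have e2 := C2 j₀ k
        rw [hte j₀, hte k, hsq j₀] at e2
        linear_combination e2
      obtain ⟨n, hpq⟩ := scaled (mul_ne_zero hc' (mul_ne_zero he hj₀)) hp1
      have hn : n ≠ 0 := by
        intro h0
        exact hi₀ (by rw [hpq i₀, h0, zero_mul])
      have hfin := hindep (m * e) (-n)
        (fun j k => by rw [hXpq j k, hYst j k, hpq j, hsq j, hte k]; ring)
      exact hn (by linear_combination -hfin.2)
    · -- Case C : both pairs independent; determinant argument
      have hdet1 : (α₁ * β₁) * ((p 0 * s 1 - p 1 * s 0) * (q 0 * t 1 - q 1 * t 0)) = 0 := by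
        have e00 := C1 0 0
        have e01 := C1 0 1
        have e10 := C1 1 0
        have e11 := C1 1 1
        calc (α₁ * β₁) * ((p 0 * s 1 - p 1 * s 0) * (q 0 * t 1 - q 1 * t 0))
            = (α₁ * (p 0 * q 0) + β₁ * (s 0 * t 0)) * (α₁ * (p 1 * q 1) + β₁ * (s 1 * t 1))
              - (α₁ * (p 0 * q 1) + β₁ * (s 0 * t 1)) * (α₁ * (p 1 * q 0) + β₁ * (s 1 * t 0)) := by
              ring
          _ = (p i₀ * t l₁ * (q 0 * s 0)) * (p i₀ * t l₁ * (q 1 * s 1))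
              - (p i₀ * t l₁ * (q 0 * s 1)) * (p i₀ * t l₁ * (q 1 * s 0)) := by
              rw [← e00, ← e11, ← e01, ← e10]
          _ = 0 := by ring
      have hab : α₁ * β₁ = 0 := by
        rcases mul_eq_zero.mp hdet1 with h' | h'
        · exact h'
        · exact absurd h' (mul_ne_zero hps hqt)
      rcases mul_eq_zero.mp hab with hα₁ | hβ₁
      · -- α₁ = 0 : C1 becomes c*(q j * s k) = β₁ * (s j * t k)
        have hq2 : ∀ j, (p i₀ * t l₁ * s i₁) * q j = (β₁ * t i₁) * s j := by
          intro j
          have e1 := C1 j i₁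
          rw [hα₁] at e1
          linear_combination e1
        obtain ⟨m, hqs⟩ := scaled (mul_ne_zero hc hi₁) hq2
        have hsj₀ : s j₀ ≠ 0 := by
          intro h0
          exact hj₀ (by rw [hqs j₀, h0, mul_zero])
        have hβ₁ : β₁ ≠ 0 := by
          intro h0
          have e1 := C1 j₀ i₁
          rw [hα₁, h0] at e1
          simp at e1
          rcases e1 with (h' | h') | h' | h'
          · exact hi₀ h'
          · exact hl₁ h'
          · exact hj₀ h'
          · exact hi₁ h'
        have ht2 : ∀ k, (β₁ * s j₀) * t k = (p i₀ * t l₁ * q j₀) * s k := by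
          intro k
          have e1 := C1 j₀ k
          rw [hα₁] at e1
          linear_combination -e1
        obtain ⟨n, hts⟩ := scaled (mul_ne_zero hβ₁ hsj₀) ht2
        exact hqt (by rw [hqs 0, hqs 1, hts 0, hts 1]; ring)
      · -- β₁ = 0 : C1 becomes c*(q j * s k) = α₁ * (p j * q k)
        have hs2 : ∀ k, (p i₀ * t l₁ * q j₀) * s k = (α₁ * p j₀) * q k := by
          intro k
          have e1 := C1 j₀ k
          rw [hβ₁] at e1
          linear_combination e1
        obtain ⟨r, hsq⟩ := scaled (mul_ne_zero hc hj₀) hs2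
        have hα₁ : α₁ ≠ 0 := by
          intro h0
          have hz : p i₀ * t l₁ * q j₀ * s i₁ = 0 := by
            rw [hs2 i₁, h0]; ring
          exact mul_ne_zero (mul_ne_zero hc hj₀) hi₁ hz
        have hp2 : ∀ j, (α₁ * q j₀) * p j = (p i₀ * t l₁ * (r * q j₀)) * q j := by
          intro j
          have e1 := C1 j j₀
          rw [hβ₁, hsq j₀] at e1
          linear_combination -e1
        obtain ⟨w, hpw⟩ := scaled (mul_ne_zero hα₁ hj₀) hp2
        exact hps (by rw [hpw 0, hpw 1, hsq 0, hsq 1]; ring)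


section Helpers

variable {A B C D : Type*} [AddCommGroup A] [Module ℂ A] [AddCommGroup B] [Module ℂ B]
  [AddCommGroup C] [Module ℂ C] [AddCommGroup D] [Module ℂ D]

/-- Product of two linear functionals, as a functional on the tensor product. -/
def tf (f : A →ₗ[ℂ] ℂ) (g : B →ₗ[ℂ] ℂ) : A ⊗[ℂ] B →ₗ[ℂ] ℂ :=
  TensorProduct.lift (LinearMap.mk₂ ℂ (fun a b => f a * g b)
    (fun m₁ m₂ n => by simp [add_mul])
    (fun c m n => by simp; ring)
    (fun m n₁ n₂ => by simp [mul_add])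
    (fun c m n => by simp; ring))

@[simp] lemma tf_tmul (f : A →ₗ[ℂ] ℂ) (g : B →ₗ[ℂ] ℂ) (a : A) (b : B) :
    tf f g (a ⊗ₜ[ℂ] b) = f a * g b := rfl

/-- Contraction of the left tensor factor with a functional. -/
def contrL (f : A →ₗ[ℂ] ℂ) : A ⊗[ℂ] B →ₗ[ℂ] B :=
  TensorProduct.lift (LinearMap.mk₂ ℂ (fun a b => f a • b)
    (fun m₁ m₂ n => by simp [add_smul])
    (fun c m n => by simp [mul_smul])
    (fun m n₁ n₂ => by simp)
    (fun c m n => by simp [smul_comm c]))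

@[simp] lemma contrL_tmul (f : A →ₗ[ℂ] ℂ) (a : A) (b : B) :
    contrL f (a ⊗ₜ[ℂ] b) = f a • b := rfl

/-- Contraction of the right tensor factor with a functional. -/
def contrR (g : B →ₗ[ℂ] ℂ) : A ⊗[ℂ] B →ₗ[ℂ] A :=
  TensorProduct.lift (LinearMap.mk₂ ℂ (fun a b => g b • a)
    (fun m₁ m₂ n => by simp)
    (fun c m n => by simp [smul_comm c])
    (fun m n₁ n₂ => by simp [add_smul])
    (fun c m n => by simp [mul_smul]))

@[simp] lemma contrR_tmul (g : B →ₗ[ℂ] ℂ) (a : A) (b : B) :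
    contrR g (a ⊗ₜ[ℂ] b) = g b • a := rfl

lemma tf_map (f : B →ₗ[ℂ] ℂ) (g : D →ₗ[ℂ] ℂ) (h : A →ₗ[ℂ] B) (k : C →ₗ[ℂ] D)
    (z : A ⊗[ℂ] C) :
    tf f g (TensorProduct.map h k z) = tf (f ∘ₗ h) (g ∘ₗ k) z := by
  induction z using TensorProduct.induction_on with
  | zero => simp
  | tmul a c => simp
  | add z₁ z₂ h₁ h₂ => simp [h₁, h₂]

lemma tf_zero_left {f : A →ₗ[ℂ] ℂ} (g : B →ₗ[ℂ] ℂ) (hf : ∀ a, f a = 0)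
    (z : A ⊗[ℂ] B) : tf f g z = 0 := by
  induction z using TensorProduct.induction_on with
  | zero => simp
  | tmul a b => simp [hf]
  | add z₁ z₂ h₁ h₂ => simp [h₁, h₂]

lemma phi_contrL_assoc_symm (ψ : A →ₗ[ℂ] ℂ) (R : C →ₗ[ℂ] D) (φ : B ⊗[ℂ] D →ₗ[ℂ] ℂ)
    (z : A ⊗[ℂ] (B ⊗[ℂ] C)) :
    φ (TensorProduct.map (contrL ψ) R ((TensorProduct.assoc ℂ A B C).symm z))
      = tf ψ (φ ∘ₗ TensorProduct.map LinearMap.id R) z := by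
  induction z using TensorProduct.induction_on with
  | zero => simp
  | tmul a w =>
      induction w using TensorProduct.induction_on with
      | zero => simp
      | tmul b c =>
          simp only [TensorProduct.assoc_symm_tmul, TensorProduct.map_tmul, contrL_tmul,
            tf_tmul, LinearMap.coe_comp, Function.comp_apply, LinearMap.id_coe, id_eq]
          rw [← TensorProduct.smul_tmul', map_smul, smul_eq_mul]
      | add w₁ w₂ h₁ h₂ =>
          simp only [TensorProduct.tmul_add, map_add] at h₁ h₂ ⊢
          rw [h₁, h₂]
  | add z₁ z₂ h₁ h₂ => simp only [map_add]; rw [h₁, h₂]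

lemma phi_contrR_assoc (ψ : C →ₗ[ℂ] ℂ) (φ : A ⊗[ℂ] B →ₗ[ℂ] ℂ)
    (z : (A ⊗[ℂ] B) ⊗[ℂ] C) :
    φ (TensorProduct.map LinearMap.id (contrR ψ) ((TensorProduct.assoc ℂ A B C) z))
      = tf φ ψ z := by
  induction z using TensorProduct.induction_on with
  | zero => simp
  | tmul w c =>
      induction w using TensorProduct.induction_on with
      | zero => simp
      | tmul a b =>
          simp [TensorProduct.assoc_tmul, TensorProduct.tmul_smul, smul_eq_mul, mul_comm]
      | add w₁ w₂ h₁ h₂ =>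
          simp only [TensorProduct.add_tmul, map_add] at h₁ h₂ ⊢
          rw [h₁, h₂]
  | add z₁ z₂ h₁ h₂ => simp only [map_add]; rw [h₁, h₂]

lemma apply_contrL (f : A →ₗ[ℂ] ℂ) (g : B →ₗ[ℂ] ℂ) (z : A ⊗[ℂ] B) :
    g (contrL f z) = tf f g z := by
  induction z using TensorProduct.induction_on with
  | zero => simp
  | tmul a b => simp
  | add z₁ z₂ h₁ h₂ => simp [h₁, h₂]

lemma apply_contrR (f : A →ₗ[ℂ] ℂ) (g : B →ₗ[ℂ] ℂ) (z : A ⊗[ℂ] B) :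
    f (contrR g z) = tf f g z := by
  induction z using TensorProduct.induction_on with
  | zero => simp
  | tmul a b => simp [mul_comm]
  | add z₁ z₂ h₁ h₂ => simp [h₁, h₂]

lemma tf_expansion {ι κ : Type*} [Fintype ι] [Fintype κ] [DecidableEq ι] [DecidableEq κ]
    (b : Module.Basis ι ℂ A) (c : Module.Basis κ ℂ B) (z : A ⊗[ℂ] B) :
    z = ∑ i, ∑ j, tf (b.coord i) (c.coord j) z • (b i ⊗ₜ[ℂ] c j) := by
  induction z using TensorProduct.induction_on with
  | zero => simp
  | tmul a b' =>
      have ha : a = ∑ i, b.repr a i • b i := (b.sum_repr a).symm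
      have hb : b' = ∑ j, c.repr b' j • c j := (c.sum_repr b').symm
      calc a ⊗ₜ[ℂ] b' = (∑ i, b.repr a i • b i) ⊗ₜ[ℂ] (∑ j, c.repr b' j • c j) := by
            rw [← ha, ← hb]
        _ = ∑ i, ∑ j, (b.repr a i • b i) ⊗ₜ[ℂ] (c.repr b' j • c j) := by
            rw [TensorProduct.sum_tmul]
            exact Finset.sum_congr rfl fun i _ => TensorProduct.tmul_sum _ _ _
        _ = ∑ i, ∑ j, tf (b.coord i) (c.coord j) (a ⊗ₜ[ℂ] b') • (b i ⊗ₜ[ℂ] c j) := by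
            refine Finset.sum_congr rfl fun i _ => Finset.sum_congr rfl fun j _ => ?_
            simp [TensorProduct.smul_tmul', TensorProduct.tmul_smul, smul_smul,
              Module.Basis.coord_apply, mul_comm]
  | add z₁ z₂ h₁ h₂ =>
      conv_lhs => rw [h₁, h₂]
      simp only [map_add, add_smul, Finset.sum_add_distrib]

end Helpers

section Master

variable (E : ℕ+ → Type*) [∀ t, NormedAddCommGroup (E t)] [∀ t, InnerProductSpace ℂ (E t)]
variable (β : ∀ s t : ℕ+, E (s + t) →ₗᵢ[ℂ] (E s ⊗[ℂ] E t))

lemma tf_zero_right {A B : Type*} [AddCommGroup A] [Module ℂ A] [AddCommGroup B]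
    [Module ℂ B] (f : A →ₗ[ℂ] ℂ) {g : B →ₗ[ℂ] ℂ} (hg : ∀ b, g b = 0)
    (z : A ⊗[ℂ] B) : tf f g z = 0 := by
  induction z using TensorProduct.induction_on with
  | zero => simp
  | tmul a b => simp [hg]
  | add z₁ z₂ h₁ h₂ => simp [h₁, h₂]

lemma master (hassoc : SubprodAssoc E β)
    (φ : E 1 ⊗[ℂ] E 1 →ₗ[ℂ] ℂ) (hφ : ∀ z : E (1+1), φ (β 1 1 z) = 0)
    (ψ₁ ψ₂ : E 1 →ₗ[ℂ] ℂ) (w : E (1+1+(1+1))) :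
    φ (TensorProduct.map
        (contrL ψ₁ ∘ₗ (β 1 1).toLinearMap)
        (contrR ψ₂ ∘ₗ (β 1 1).toLinearMap)
        (β (1+1) (1+1) w)) = 0 := by
  set Γ' : E (1+1) →ₗ[ℂ] E 1 ⊗[ℂ] E 1 := (β 1 1).toLinearMap with hΓ'
  set R : E (1+1) →ₗ[ℂ] E 1 := contrR ψ₂ ∘ₗ Γ' with hR
  -- inner claim
  have inner_claim : ∀ ζ : E (1+(1+1)),
      (φ ∘ₗ TensorProduct.map LinearMap.id R) ((β 1 (1+1)) ζ) = 0 := by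
    intro ζ
    have hz : castE E (add_assoc 1 1 1) (ζ : E (1+1+1)) = ζ := rfl
    have ha := hassoc 1 1 1 ζ
    rw [hz] at ha
    have hsplit : TensorProduct.map LinearMap.id R
        = (TensorProduct.map (LinearMap.id : E 1 →ₗ[ℂ] E 1) (contrR (A := E 1) ψ₂)).comp
            (TensorProduct.map (LinearMap.id : E 1 →ₗ[ℂ] E 1) Γ') := by
      rw [← TensorProduct.map_comp, LinearMap.id_comp]
    rw [LinearMap.comp_apply, hsplit, LinearMap.comp_apply, ← ha]
    rw [phi_contrR_assoc, tf_map]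
    exact tf_zero_left _ hφ _
  have hsplit : TensorProduct.map (contrL ψ₁ ∘ₗ Γ') R
      = (TensorProduct.map (contrL ψ₁) R).comp (TensorProduct.map Γ' LinearMap.id) := by
    rw [← TensorProduct.map_comp, LinearMap.comp_id]
  rw [hsplit, LinearMap.comp_apply]
  have ha := hassoc 1 1 (1+1) w
  have hstep : TensorProduct.map Γ' LinearMap.id ((β (1+1) (1+1)) w)
      = (TensorProduct.assoc ℂ (E 1) (E 1) (E (1+1))).symm
          (TensorProduct.map LinearMap.id (β 1 (1+1)).toLinearMap
            ((β 1 (1+(1+1))) (castE E (add_assoc 1 1 (1+1)) w))) := by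
    rw [← ha, LinearEquiv.symm_apply_apply]
  rw [hstep, phi_contrL_assoc_symm, tf_map]
  refine tf_zero_right _ (fun b => ?_) _
  exact inner_claim b

end Master

end AuxForStatement13


/-- The system `(E_{2t})_t` obtained by restriction to even times never has a basis of
type `𝓔₂(a)`. -/
theorem statement13
    (E : ℕ+ → Type*) [∀ t, NormedAddCommGroup (E t)] [∀ t, InnerProductSpace ℂ (E t)]
    (hdim : ∀ t, Module.finrank ℂ (E t) = 2)
    (β : ∀ s t : ℕ+, E (s + t) →ₗᵢ[ℂ] (E s ⊗[ℂ] E t))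
    (hassoc : SubprodAssoc E β) :
    ¬ ∃ (u v : ∀ t : ℕ+, E (2 * t)) (a : ℝ), 0 ≤ a ∧ a < 1 ∧
      IsBasisE2 (fun t => E (2 * t)) (restrictβ E β 2) a u v := by
  rintro ⟨u, v, a, ha0, ha1, hnu, hnv, hin, hueven, huodd, hveven, hvodd⟩
  haveI : FiniteDimensional ℂ (E 1) := Module.finite_of_finrank_eq_succ (n := 1) (hdim 1)
  haveI : FiniteDimensional ℂ (E (1+1)) := Module.finite_of_finrank_eq_succ (n := 1) (hdim (1+1))
  set x : E 1 ⊗[ℂ] E 1 := β 1 1 (u 1) with hxdef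
  set y : E 1 ⊗[ℂ] E 1 := β 1 1 (v 1) with hydef
  -- inner products
  have hxx : (@inner ℂ _ tensorInnerProductSpace.toInner x x : ℂ) = 1 := by
    rw [hxdef]
    exact (LinearIsometry.inner_map_map (β 1 1) (u 1) (u 1)).trans
      ((inner_self_eq_norm_sq_to_K (𝕜 := ℂ) (u 1)).trans (by rw [hnu 1]; norm_num))
  have hyy : (@inner ℂ _ tensorInnerProductSpace.toInner y y : ℂ) = 1 := by
    rw [hydef]
    exact (LinearIsometry.inner_map_map (β 1 1) (v 1) (v 1)).trans
      ((inner_self_eq_norm_sq_to_K (𝕜 := ℂ) (v 1)).trans (by rw [hnv 1]; norm_num))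
  have hxy : (@inner ℂ _ tensorInnerProductSpace.toInner x y : ℂ) = (a : ℂ) := by
    rw [hxdef, hydef]
    exact (LinearIsometry.inner_map_map (β 1 1) (u 1) (v 1)).trans ((hin 1).trans (by norm_num))
  have hyx : (@inner ℂ _ tensorInnerProductSpace.toInner y x : ℂ) = (a : ℂ) := by
    rw [← inner_conj_symm, hxy, Complex.conj_ofReal]
  -- linear independence of x, y
  have hindep_c : ∀ α γ : ℂ, α • x + γ • y = 0 → α = 0 ∧ γ = 0 := by
    intro α γ h
    have h1 : α + γ * (a : ℂ) = 0 := by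
      have h' := congrArg (fun z => (@inner ℂ _ tensorInnerProductSpace.toInner x z : ℂ)) h
      rw [inner_add_right, inner_smul_right, inner_smul_right, hxx, hxy, inner_zero_right] at h'
      linear_combination h'
    have h2 : α * (a : ℂ) + γ = 0 := by
      have h' := congrArg (fun z => (@inner ℂ _ tensorInnerProductSpace.toInner y z : ℂ)) h
      rw [inner_add_right, inner_smul_right, inner_smul_right, hyy, hyx, inner_zero_right] at h'
      linear_combination h'
    have har : (1 : ℝ) - a * a ≠ 0 := by nlinarith
    have hac : (1 : ℂ) - (a : ℂ) * (a : ℂ) ≠ 0 := by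
      have : ((1 - a * a : ℝ) : ℂ) ≠ 0 := Complex.ofReal_ne_zero.mpr har
      push_cast at this
      exact this
    constructor
    · have hα : α * ((1 : ℂ) - (a : ℂ) * (a : ℂ)) = 0 := by
        linear_combination h1 - (a : ℂ) * h2
      rcases mul_eq_zero.mp hα with h' | h'
      · exact h'
      · exact absurd h' hac
    · have hγ : γ * ((1 : ℂ) - (a : ℂ) * (a : ℂ)) = 0 := by
        linear_combination h2 - (a : ℂ) * h1
      rcases mul_eq_zero.mp hγ with h' | h'
      · exact h'
      · exact absurd h' hac
  have hLI : LinearIndependent ℂ ![x, y] :=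
    LinearIndependent.pair_iff.mpr fun s t h => hindep_c s t h
  -- the span K
  set K : Submodule ℂ (E 1 ⊗[ℂ] E 1) := Submodule.span ℂ {x, y} with hKdef
  have hrange_set : Set.range ![x, y] = {x, y} := by
    ext z
    constructor
    · rintro ⟨i, rfl⟩
      fin_cases i
      · exact Set.mem_insert _ _
      · exact Set.mem_insert_iff.mpr (Or.inr rfl)
    · rintro (rfl | rfl)
      · exact ⟨0, rfl⟩
      · exact ⟨1, rfl⟩
  have hKfr : Module.finrank ℂ K = 2 := by
    rw [hKdef, ← hrange_set, finrank_span_eq_card hLI]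
    simp
  have hrange_eq : LinearMap.range (β 1 1).toLinearMap = K := by
    have hle : K ≤ LinearMap.range (β 1 1).toLinearMap := by
      rw [hKdef, Submodule.span_le]
      rintro z hz
      simp only [Set.mem_insert_iff, Set.mem_singleton_iff] at hz
      rcases hz with rfl | rfl
      · exact ⟨u 1, rfl⟩
      · exact ⟨v 1, rfl⟩
    have hfr : Module.finrank ℂ (LinearMap.range (β 1 1).toLinearMap)
        ≤ Module.finrank ℂ K := by
      rw [LinearMap.finrank_range_of_inj (β 1 1).injective, hKfr]
      exact le_of_eq (hdim (1+1))
    exact (Submodule.eq_of_le_of_finrank_le hle hfr).symm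
  have hβmem : ∀ z : E (1+1), β 1 1 z ∈ K := fun z => hrange_eq ▸ ⟨z, rfl⟩
  -- the two master-lemma consequences
  have key_u : ∀ (φ : E 1 ⊗[ℂ] E 1 →ₗ[ℂ] ℂ), (∀ z : E (1+1), φ (β 1 1 z) = 0) →
      ∀ f g : E 1 →ₗ[ℂ] ℂ, φ ((contrL f x) ⊗ₜ[ℂ] (contrR g y)) = 0 := by
    intro φ hφ f g
    have hm := master E β hassoc φ hφ f g (u (1+1) : E (1+1+(1+1)))
    have fact_u : (β (1+1) (1+1)) (u (1+1) : E (1+1+(1+1)))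
        = (u 1 : E (1+1)) ⊗ₜ[ℂ] (v 1 : E (1+1)) := huodd 1 1 (by decide)
    rw [fact_u] at hm
    erw [TensorProduct.map_tmul] at hm
    exact hm
  have key_v : ∀ (φ : E 1 ⊗[ℂ] E 1 →ₗ[ℂ] ℂ), (∀ z : E (1+1), φ (β 1 1 z) = 0) →
      ∀ f g : E 1 →ₗ[ℂ] ℂ, φ ((contrL f y) ⊗ₜ[ℂ] (contrR g x)) = 0 := by
    intro φ hφ f g
    have hm := master E β hassoc φ hφ f g (v (1+1) : E (1+1+(1+1)))
    have fact_v : (β (1+1) (1+1)) (v (1+1) : E (1+1+(1+1)))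
        = (v 1 : E (1+1)) ⊗ₜ[ℂ] (u 1 : E (1+1)) := hvodd 1 1 (by decide)
    rw [fact_v] at hm
    erw [TensorProduct.map_tmul] at hm
    exact hm
  -- membership criterion via orthogonality
  haveI hKfd : FiniteDimensional ℂ K := by
    rw [hKdef]
    exact FiniteDimensional.span_of_finite ℂ (Set.toFinite _)
  haveI : CompleteSpace K := FiniteDimensional.complete ℂ K
  have hT : ∀ T : E 1 ⊗[ℂ] E 1,
      (∀ φ : E 1 ⊗[ℂ] E 1 →ₗ[ℂ] ℂ, (∀ z : E (1+1), φ (β 1 1 z) = 0) → φ T = 0) →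
      T ∈ K := by
    intro T hTφ
    rw [← Submodule.orthogonal_orthogonal (K := K)]
    refine (Submodule.mem_orthogonal _ T).mpr ?_
    intro w hw
    have hφw : ∀ z : E (1+1), (innerFunc w) (β 1 1 z) = 0 := by
      intro z
      have hz : (@inner ℂ _ tensorInnerProductSpace.toInner (β 1 1 z) w : ℂ) = 0 := (Submodule.mem_orthogonal K w).mp hw _ (hβmem z)
      have : (@inner ℂ _ tensorInnerProductSpace.toInner w (β 1 1 z) : ℂ) = 0 := by
        rw [← inner_conj_symm, hz, map_zero]
      exact this
    exact hTφ (innerFunc w) hφw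
  -- coordinates
  set b : Module.Basis (Fin 2) ℂ (E 1) := Module.finBasisOfFinrankEq ℂ (E 1) (hdim 1) with hbdef
  set X : Fin 2 → Fin 2 → ℂ := fun i j => tf (b.coord i) (b.coord j) x with hXdef
  set Y : Fin 2 → Fin 2 → ℂ := fun i j => tf (b.coord i) (b.coord j) y with hYdef
  have hXYmat : ∀ i l, ∃ α γ : ℂ, ∀ j k, X i j * Y k l = α * X j k + γ * Y j k := by
    intro i l
    have hTK : (contrL (b.coord i) x) ⊗ₜ[ℂ] (contrR (b.coord l) y) ∈ K :=
      hT _ (fun φ hφ => key_u φ hφ (b.coord i) (b.coord l))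
    obtain ⟨α, γ, hαγ⟩ := Submodule.mem_span_pair.mp hTK
    refine ⟨α, γ, fun j k => ?_⟩
    have h' := congrArg (tf (b.coord j) (b.coord k)) hαγ
    simp only [map_add, map_smul, smul_eq_mul, tf_tmul] at h'
    rw [apply_contrL, apply_contrR] at h'
    linear_combination -h'
  have hYXmat : ∀ i l, ∃ α γ : ℂ, ∀ j k, Y i j * X k l = α * X j k + γ * Y j k := by
    intro i l
    have hTK : (contrL (b.coord i) y) ⊗ₜ[ℂ] (contrR (b.coord l) x) ∈ K :=
      hT _ (fun φ hφ => key_v φ hφ (b.coord i) (b.coord l))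
    obtain ⟨α, γ, hαγ⟩ := Submodule.mem_span_pair.mp hTK
    refine ⟨α, γ, fun j k => ?_⟩
    have h' := congrArg (tf (b.coord j) (b.coord k)) hαγ
    simp only [map_add, map_smul, smul_eq_mul, tf_tmul] at h'
    rw [apply_contrL, apply_contrR] at h'
    linear_combination -h'
  have hindepmat : ∀ α γ : ℂ, (∀ j k, α * X j k + γ * Y j k = 0) → α = 0 ∧ γ = 0 := by
    intro α γ h
    apply hindep_c
    rw [tf_expansion b b (α • x + γ • y)]
    refine Finset.sum_eq_zero fun j _ => Finset.sum_eq_zero fun k _ => ?_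
    have hz : tf (b.coord j) (b.coord k) (α • x + γ • y) = 0 := by
      simp only [map_add, map_smul, smul_eq_mul]
      exact h j k
    rw [hz, zero_smul]
  exact matrix_core hindepmat hXYmat hYXmat


end SubprodHilbert
end
end
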